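/- Let s > 0 be a real number and let P(x) = Σ_{k=m}^{d} b_k x^k be a real polynomial function whose lowest-order nonzero coefficient is b_m ≠ 0. Then κ^{m+1} · ∫_0^s e^{-κx} P(x) dx tends to m! · b_m as κ → +∞. -/

import Mathlib

open MeasureTheory intervalIntegral Filter Real

private lemma gamma_int (k : ℕ) : ∫ u in Set.Ioi (0:ℝ), Real.exp (-u) * u ^ k = (k.factorial : ℝ) := by
  have h : (0:ℝ) < (k : ℝ) + 1 := by positivity
  have h2 := Real.Gamma_eq_integral h
  have h3 : Real.Gamma ((k:ℝ) + 1) = (k.factorial : ℝ) := by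
    rw [show ((k:ℕ):ℝ) + 1 = ((k+1 : ℕ) : ℝ) from by push_cast; ring]
    exact_mod_cast Real.Gamma_nat_eq_factorial k
  rw [← h3, h2]
  congr 1
  ext u
  norm_num [Real.rpow_natCast]

private lemma gamma_integrable (k : ℕ) :
    IntegrableOn (fun u : ℝ => Real.exp (-u) * u ^ k) (Set.Ioi (0:ℝ)) := by
  have h : (0:ℝ) < (k : ℝ) + 1 := by positivity
  have := Real.GammaIntegral_convergent h
  convert this using 2 with u
  norm_num [Real.rpow_natCast]

private lemma key (s : ℝ) (hs : 0 < s) (k : ℕ) :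
    Tendsto (fun κ : ℝ => κ ^ (k + 1) * ∫ x in (0:ℝ)..s, Real.exp (-κ * x) * x ^ k)
      atTop (nhds (k.factorial : ℝ)) := by
  have hmul : Tendsto (fun κ : ℝ => κ * s) atTop atTop :=
    Tendsto.atTop_mul_const hs tendsto_id
  have main : Tendsto (fun κ : ℝ => ∫ u in (0:ℝ)..(κ * s), Real.exp (-u) * u ^ k)
      atTop (nhds (k.factorial : ℝ)) := by
    rw [← gamma_int k]
    exact (intervalIntegral_tendsto_integral_Ioi 0 (gamma_integrable k) tendsto_id).comp hmul
  refine main.congr' ?_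
  filter_upwards [eventually_gt_atTop (0:ℝ)] with κ hκ
  have hκ' : κ ≠ 0 := ne_of_gt hκ
  have := intervalIntegral.integral_comp_mul_left
    (fun u : ℝ => Real.exp (-u) * u ^ k) (a := 0) (b := s) hκ'
  rw [mul_zero] at this
  have hx : ∀ x : ℝ, Real.exp (-κ * x) * x ^ k = κ⁻¹ ^ k * (Real.exp (-(κ * x)) * (κ * x) ^ k) := by
    intro x
    rw [mul_pow, neg_mul]
    field_simp
    have h1 : κ⁻¹ ^ k * κ ^ k = 1 := by rw [← mul_pow, inv_mul_cancel₀ hκ', one_pow]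
    linear_combination (-(x ^ k)) * h1
  simp only [hx, intervalIntegral.integral_const_mul, this, smul_eq_mul]
  field_simp
  have h2 : κ⁻¹ ^ k * κ ^ k = 1 := by rw [← mul_pow, inv_mul_cancel₀ hκ', one_pow]
  linear_combination (-(κ * ∫ (u : ℝ) in (0:ℝ)..κ * s, Real.exp (-u) * u ^ k)) * h2





/-- Watson-type asymptotics at `κ → +∞`: if `P(x) = ∑_{k=m}^d b_k x^k` with lowest
nonzero coefficient `b_m ≠ 0` and `s > 0`, then
`κ^{m+1} ∫_0^s e^{-κx} P(x) dx → m! b_m` as `κ → +∞`. -/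
theorem stmt_1 (s : ℝ) (hs : 0 < s) (m d : ℕ) (hmd : m ≤ d) (b : ℕ → ℝ) (hb : b m ≠ 0)
    (P : ℝ → ℝ) (hP : ∀ x, P x = ∑ k ∈ Finset.Icc m d, b k * x ^ k) :
    Filter.Tendsto (fun κ : ℝ => κ ^ (m + 1) * ∫ x in (0:ℝ)..s, Real.exp (-κ * x) * P x)
      Filter.atTop (nhds ((Nat.factorial m : ℝ) * b m)) := by
  have hsum : ∀ κ : ℝ, κ ^ (m + 1) * ∫ x in (0:ℝ)..s, Real.exp (-κ * x) * P x
      = ∑ k ∈ Finset.Icc m d, b k *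
        (κ ^ (m + 1) * ∫ x in (0:ℝ)..s, Real.exp (-κ * x) * x ^ k) := by
    intro κ
    have h1 : (∫ x in (0:ℝ)..s, Real.exp (-κ * x) * P x)
        = ∑ k ∈ Finset.Icc m d, b k * ∫ x in (0:ℝ)..s, Real.exp (-κ * x) * x ^ k := by
      have : ∀ x : ℝ, Real.exp (-κ * x) * P x
          = ∑ k ∈ Finset.Icc m d, b k * (Real.exp (-κ * x) * x ^ k) := by
        intro x
        rw [hP x, Finset.mul_sum]
        exact Finset.sum_congr rfl fun k _ => by ring
      simp only [this]
      rw [intervalIntegral.integral_finset_sum]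
      · exact Finset.sum_congr rfl fun k _ => intervalIntegral.integral_const_mul _ _
      · intro k _
        exact (Continuous.intervalIntegrable (by continuity) _ _)
    rw [h1, Finset.mul_sum]
    exact Finset.sum_congr rfl fun k _ => by ring
  simp only [hsum]
  have hfinal : ((Nat.factorial m : ℝ) * b m)
      = ∑ k ∈ Finset.Icc m d, (if k = m then (Nat.factorial m : ℝ) * b m else 0) := by
    rw [Finset.sum_ite_eq' (Finset.Icc m d) m fun _ => (Nat.factorial m : ℝ) * b m]
    simp [Finset.mem_Icc, hmd]
  rw [hfinal]
  refine tendsto_finset_sum _ fun k hk => ?_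
  have hkm : m ≤ k := (Finset.mem_Icc.mp hk).1
  have hpow : Tendsto (fun κ : ℝ => (κ⁻¹) ^ (k - m)) atTop
      (nhds (if k = m then 1 else 0)) := by
    rcases eq_or_ne k m with h | h
    · simp [h]
    · have hkm' : k - m ≠ 0 := by omega
      simp only [if_neg h]
      have : Tendsto (fun κ : ℝ => (κ⁻¹) ^ (k - m)) atTop (nhds (0 ^ (k - m))) :=
        tendsto_inv_atTop_zero.pow (k - m)
      simpa [zero_pow hkm'] using this
  have hmain := ((key s hs k).mul hpow).const_mul (b k)
  have hlim : b k * ((k.factorial : ℝ) * if k = m then 1 else 0)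
      = (if k = m then (Nat.factorial m : ℝ) * b m else 0) := by
    rcases eq_or_ne k m with h | h
    · subst h; simp; ring
    · simp [h]
  rw [hlim] at hmain
  refine hmain.congr' ?_
  filter_upwards [eventually_gt_atTop (0:ℝ)] with κ hκ
  have hκ' : κ ≠ 0 := ne_of_gt hκ
  have : κ ^ (m + 1) = κ ^ (k + 1) * κ⁻¹ ^ (k - m) := by
    rw [inv_pow, ← pow_sub₀ κ hκ' (by omega : k - m ≤ k + 1)]
    congr 1
    omega
  rw [this]; ring
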